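/- Let g ∈ F((x^{-1})) satisfy P*(x)·g(x^d) = g(x) where P* ∈ F[x] has degree at most d-1 and d ≥ 2. If p(x)/q(x) is a rational function with ||g(x) - p(x)/q(x)|| ≤ -2||q(x)|| - c for some integer c ≥ 1, then ||g(x) - P*(x)p(x^d)/q(x^d)|| ≤ -2||q(x^d)|| - (cd - d + 1). In particular, P*(x)p(x^d)/q(x^d) approximates g with rate at least cd - d + 1. -/

import Mathlib

open Polynomial
open scoped Classical

noncomputable section

variable {F : Type*} [Field F]

/-- The element `x = T⁻¹` of `F((T))`: we regard `F((x⁻¹))` as the field of formal Laurent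
series in `T = x⁻¹`. -/
def xx : LaurentSeries F := ((PowerSeries.X : PowerSeries F) : LaurentSeries F)⁻¹

/-- Evaluation of a polynomial in the variable `x` inside `F((x⁻¹))`. -/
def pev (p : Polynomial F) : LaurentSeries F := Polynomial.aeval (xx : LaurentSeries F) p

/-- Degree valuation `‖f‖` on `F((x⁻¹))`, with `‖0‖ = ⊥`. -/
def degB (f : LaurentSeries F) : WithBot ℤ := if f = 0 then ⊥ else (-(f.order) : ℤ)

/-- Substitution `x ↦ x^d` (equivalently `T ↦ T^d`) on Laurent series. -/
def lsubst (d : ℕ) (f : LaurentSeries F) : LaurentSeries F :=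
  if h : 0 < d then
    HahnSeries.embDomain
      (OrderEmbedding.ofStrictMono (fun n : ℤ => (d : ℤ) * n)
        (fun _ _ hab => mul_lt_mul_of_pos_left hab (by exact_mod_cast h))) f
  else 0

namespace RateAux

lemma xx_eq : (xx : LaurentSeries F) = HahnSeries.single (-1 : ℤ) 1 := by
  have h : HahnSeries.single (-1 : ℤ) (1 : F)
      * ((PowerSeries.X : PowerSeries F) : LaurentSeries F) = 1 := by
    rw [HahnSeries.ofPowerSeries_X, HahnSeries.single_mul_single]
    norm_num
  rw [xx, inv_eq_of_mul_eq_one_left h]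

lemma xx_pow (n : ℕ) : (xx : LaurentSeries F) ^ n = HahnSeries.single (-(n : ℤ)) 1 := by
  rw [xx_eq, HahnSeries.single_pow]
  simp

lemma algMap_eq (a : F) :
    algebraMap F (LaurentSeries F) a = HahnSeries.single (0 : ℤ) a := by
  rw [HahnSeries.algebraMap_apply', PowerSeries.algebraMap_apply, Algebra.algebraMap_self,
    RingHom.id_apply, HahnSeries.ofPowerSeries_C, HahnSeries.C_apply]

lemma coeff_finsetSum {α : Type*} (s : Finset α) (f : α → LaurentSeries F) (k : ℤ) :
    (∑ i ∈ s, f i).coeff k = ∑ i ∈ s, (f i).coeff k := by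
  classical
  induction s using Finset.induction_on with
  | empty => simp
  | insert _ _ h ih => simp [Finset.sum_insert h, HahnSeries.coeff_add, ih]

lemma aeval_xx_pow (m : ℕ) (p : Polynomial F) :
    Polynomial.aeval ((xx : LaurentSeries F) ^ m) p
      = ∑ i ∈ p.support, HahnSeries.single (-((m * i : ℕ) : ℤ)) (p.coeff i) := by
  conv_lhs => rw [p.as_sum_support, map_sum]
  refine Finset.sum_congr rfl fun i _ => ?_
  rw [Polynomial.aeval_monomial, ← pow_mul, xx_pow, algMap_eq, HahnSeries.single_mul_single]
  simp

lemma pev_eq (p : Polynomial F) :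
    pev p = ∑ i ∈ p.support, HahnSeries.single (-(i : ℤ)) (p.coeff i) := by
  have := aeval_xx_pow (F := F) 1 p
  simp only [pow_one, one_mul] at this
  rw [pev, this]

lemma pev_coeff_nat (p : Polynomial F) (n : ℕ) :
    (pev p).coeff (-(n : ℤ)) = p.coeff n := by
  classical
  rw [pev_eq, coeff_finsetSum]
  have : ∀ i ∈ p.support,
      (HahnSeries.single (-(i : ℤ)) (p.coeff i)).coeff (-(n : ℤ))
        = if i = n then p.coeff i else 0 := by
    intro i _
    rw [HahnSeries.coeff_single]
    simp [neg_inj, Nat.cast_inj, eq_comm]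
  rw [Finset.sum_congr rfl this, Finset.sum_ite_eq' p.support n (fun i => p.coeff i)]
  by_cases hn : n ∈ p.support
  · simp [hn]
  · simp [hn, Polynomial.notMem_support_iff.mp hn]

lemma pev_ne_zero {p : Polynomial F} (hp : p ≠ 0) : pev p ≠ 0 := by
  apply HahnSeries.ne_zero_of_coeff_ne_zero (g := -(p.natDegree : ℤ))
  rw [pev_coeff_nat]
  simpa [Polynomial.coeff_natDegree] using Polynomial.leadingCoeff_ne_zero.mpr hp

lemma order_pev_ge (p : Polynomial F) (hne : pev p ≠ (0 : LaurentSeries F)) :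
    -(p.natDegree : ℤ) ≤ (pev p).order := by
  have h := HahnSeries.coeff_order_eq_zero.not.mpr hne
  set k := (pev p).order with hk
  rw [pev_eq, coeff_finsetSum] at h
  obtain ⟨i, hi, hne2⟩ := Finset.exists_ne_zero_of_sum_ne_zero h
  have hki : k = -(i : ℤ) := by
    by_contra hkk
    rw [HahnSeries.coeff_single, if_neg hkk] at hne2
    exact hne2 rfl
  rw [hki]
  have := Polynomial.le_natDegree_of_mem_supp i hi
  omega

lemma degB_pev_le (p : Polynomial F) :
    degB (pev p) ≤ ((p.natDegree : ℤ) : WithBot ℤ) := by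
  unfold degB
  split_ifs with h
  · exact bot_le
  · rw [WithBot.coe_le_coe]
    have := order_pev_ge p h
    omega

lemma degB_mul_le' {f g : LaurentSeries F} {a b : ℤ}
    (hf : degB f ≤ (a : WithBot ℤ)) (hg : degB g ≤ (b : WithBot ℤ)) :
    degB (f * g) ≤ ((a + b : ℤ) : WithBot ℤ) := by
  by_cases h0 : f = 0
  · simp [degB, h0]
  by_cases h1 : g = 0
  · simp [degB, h1]
  have hfg : f * g ≠ 0 := mul_ne_zero h0 h1
  rw [degB, if_neg h0, WithBot.coe_le_coe] at hf
  rw [degB, if_neg h1, WithBot.coe_le_coe] at hg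
  rw [degB, if_neg hfg, WithBot.coe_le_coe, HahnSeries.order_mul h0 h1]
  omega

/-- The substitution as a ring homomorphism. -/
def SdR (d : ℕ) (hd : 0 < d) : LaurentSeries F →+* LaurentSeries F :=
  HahnSeries.embDomainRingHom (AddMonoidHom.mulLeft (d : ℤ))
    (fun a b hab => by
      have hd' : (d : ℤ) ≠ 0 := by exact_mod_cast hd.ne'
      exact mul_left_cancel₀ hd' hab)
    (fun a b => by
      have hd' : (0 : ℤ) < d := by exact_mod_cast hd
      exact mul_le_mul_iff_right₀ hd')

lemma embDomain_congr {e₁ e₂ : ℤ ↪o ℤ} (h : ∀ n, e₁ n = e₂ n) (f : LaurentSeries F) :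
    HahnSeries.embDomain e₁ f = HahnSeries.embDomain e₂ f := by
  have : e₁ = e₂ := DFunLike.ext _ _ h
  rw [this]

lemma lsubst_eq {d : ℕ} (hd : 0 < d) (f : LaurentSeries F) :
    lsubst d f = SdR d hd f := by
  rw [lsubst, dif_pos hd, SdR]
  exact embDomain_congr (fun n => rfl) f

lemma lsubst_single {d : ℕ} (hd : 0 < d) (a : ℤ) (r : F) :
    lsubst d (HahnSeries.single a r) = HahnSeries.single ((d : ℤ) * a) r := by
  rw [lsubst, dif_pos hd, HahnSeries.embDomain_single]
  rfl

lemma lsubst_ne_zero {d : ℕ} (hd : 0 < d) {f : LaurentSeries F} (hf : f ≠ 0) :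
    lsubst d f ≠ 0 := by
  rw [lsubst, dif_pos hd]
  intro h
  exact hf (HahnSeries.embDomain_injective (h.trans HahnSeries.embDomain_zero.symm))

lemma order_embDomain (e : ℤ ↪o ℤ) (f : LaurentSeries F) (hf : f ≠ 0) :
    (HahnSeries.embDomain e f).order = e f.order := by
  have hne : HahnSeries.embDomain e f ≠ 0 := fun h =>
    hf (HahnSeries.embDomain_injective (h.trans HahnSeries.embDomain_zero.symm))
  apply le_antisymm
  · apply HahnSeries.order_le_of_coeff_ne_zero
    rw [HahnSeries.embDomain_coeff]
    exact HahnSeries.coeff_order_eq_zero.not.mpr hf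
  · have h := HahnSeries.coeff_order_eq_zero.not.mpr hne
    by_cases hr : (HahnSeries.embDomain e f).order ∈ Set.range e
    · obtain ⟨i, hi⟩ := hr
      rw [← hi, HahnSeries.embDomain_coeff] at h
      have h2 := HahnSeries.order_le_of_coeff_ne_zero h
      calc e f.order ≤ e i := e.monotone h2
        _ = _ := hi
    · rw [HahnSeries.embDomain_notin_range hr] at h
      exact absurd rfl h

lemma order_lsubst {d : ℕ} (hd : 0 < d) {f : LaurentSeries F} (hf : f ≠ 0) :
    (lsubst d f).order = (d : ℤ) * f.order := by
  rw [lsubst, dif_pos hd, order_embDomain _ _ hf]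
  rfl

lemma degB_lsubst_le {d : ℕ} (hd : 0 < d) {f : LaurentSeries F} {m : ℤ}
    (hf : degB f ≤ (m : WithBot ℤ)) :
    degB (lsubst d f) ≤ (((d : ℤ) * m : ℤ) : WithBot ℤ) := by
  by_cases h0 : f = 0
  · simp [degB, h0, lsubst, HahnSeries.embDomain_zero]
  have hne : lsubst d f ≠ 0 := lsubst_ne_zero hd h0
  rw [degB, if_neg h0, WithBot.coe_le_coe] at hf
  rw [degB, if_neg hne, WithBot.coe_le_coe, order_lsubst hd h0]
  have hd' : (0 : ℤ) ≤ d := by positivity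
  nlinarith

lemma pev_comp {d : ℕ} (hd : 0 < d) (p : Polynomial F) :
    pev (p.comp (Polynomial.X ^ d)) = lsubst d (pev p) := by
  rw [pev, Polynomial.aeval_comp, map_pow, Polynomial.aeval_X, aeval_xx_pow]
  rw [pev_eq, lsubst_eq hd, map_sum]
  refine Finset.sum_congr rfl fun i _ => ?_
  rw [← lsubst_eq hd, lsubst_single hd]
  congr 1
  push_cast
  ring

end RateAux

open RateAux in
/-- Suppose `g ∈ F((x⁻¹))` satisfies `P*(x) g(x^d) = g(x)` with
`deg P* ≤ d-1` and `d ≥ 2`.  If `‖g - p/q‖ ≤ -2‖q‖ - c` with `c ≥ 1`, then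
`‖g - P*(x) p(x^d)/q(x^d)‖ ≤ -2‖q(x^d)‖ - (cd - d + 1)`; that is, `P*(x)p(x^d)/q(x^d)`
approximates `g` with rate at least `cd - d + 1`. -/
theorem rate_improvement (g : LaurentSeries F) (Pstar : Polynomial F) (d : ℕ) (hd : 2 ≤ d)
    (hdeg : Pstar.natDegree ≤ d - 1) (hfe : pev Pstar * lsubst d g = g)
    (p q : Polynomial F) (hq : q ≠ 0) (c : ℤ) (hc : 1 ≤ c)
    (happ : degB (g - pev p / pev q) ≤ (((-2 * (q.natDegree : ℤ) - c) : ℤ) : WithBot ℤ)) :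
    degB (g - pev Pstar * pev (p.comp (Polynomial.X ^ d)) / pev (q.comp (Polynomial.X ^ d))) ≤
      (((-2 * ((q.comp (Polynomial.X ^ d)).natDegree : ℤ) - (c * d - d + 1)) : ℤ) :
        WithBot ℤ) := by
  have hd0 : 0 < d := lt_of_lt_of_le two_pos hd
  by_cases hP : Pstar = 0
  · have hg0 : g = 0 := by rw [← hfe, hP, pev, map_zero, zero_mul]
    simp [hg0, hP, pev, degB]
  · have key : g - pev Pstar * pev (p.comp (Polynomial.X ^ d)) / pev (q.comp (Polynomial.X ^ d))
        = pev Pstar * lsubst d (g - pev p / pev q) := by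
      rw [pev_comp hd0, pev_comp hd0, lsubst_eq hd0 (g - pev p / pev q), map_sub, map_div₀,
        ← lsubst_eq hd0 g, ← lsubst_eq hd0 (pev p), ← lsubst_eq hd0 (pev q), mul_sub, hfe]
      ring
    rw [key]
    have h1 : degB (pev Pstar) ≤ (((d : ℤ) - 1 : ℤ) : WithBot ℤ) := by
      refine (degB_pev_le Pstar).trans ?_
      rw [WithBot.coe_le_coe]
      omega
    have h2 : degB (lsubst d (g - pev p / pev q))
        ≤ (((d : ℤ) * (-2 * (q.natDegree : ℤ) - c) : ℤ) : WithBot ℤ) :=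
      degB_lsubst_le hd0 happ
    refine (degB_mul_le' h1 h2).trans ?_
    rw [WithBot.coe_le_coe, Polynomial.natDegree_comp, Polynomial.natDegree_X_pow]
    push_cast
    ring_nf
    omega

end
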